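/- arXiv:1008.4507 — 2 statements merged into one kernel-verified Lean document; each statement's English description precedes it below -/
import Mathlib

section
/- Assume d₁r₁ > d₂r₂k₂, where k₂ = (1+b₂)/(1−b₁b₂). Let φ₁, φ₂ : ℝ → ℝ be continuous, compactly supported, with 0 ≤ φ_i(x) < k_i for all x (i = 1,2), and let (u₁, u₂) be a classical solution of the Lotka–Volterra cooperative system with initial data (φ₁, φ₂) taking nonnegative values. Then 0 ≤ u_i(t,x) ≤ k_i for all t ≥ 0, x ∈ ℝ, and for every ε > 0, lim_{t→∞} sup_{|x| ≥ (2√(d₂r₂k₂)+ε)t} u₂(t,x) = 0. -/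
open Real Set Filter Topology MeasureTheory

/-- Partial derivative in time of a function `u : ℝ → ℝ → ℝ` (time, then space). -/
noncomputable def pdT (u : ℝ → ℝ → ℝ) (t x : ℝ) : ℝ := deriv (fun s => u s x) t

/-- Second partial derivative in space of a function `u : ℝ → ℝ → ℝ`. -/
noncomputable def pdXX (u : ℝ → ℝ → ℝ) (t x : ℝ) : ℝ := deriv (deriv (u t)) x

/-- A function `u : [0,∞) × ℝ → ℝ` (encoded as a total function) which is bounded and
uniformly continuous on `[0,∞) × ℝ`, continuously differentiable in `t` and twice
continuously differentiable in `x` on `(0,∞) × ℝ`. -/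
structure RegularFn (u : ℝ → ℝ → ℝ) : Prop where
  bounded : ∃ M : ℝ, ∀ t x : ℝ, 0 ≤ t → |u t x| ≤ M
  unifCont : UniformContinuousOn (fun p : ℝ × ℝ => u p.1 p.2) (Ici 0 ×ˢ (univ : Set ℝ))
  contT : ∀ x : ℝ, ContDiffOn ℝ 1 (fun s => u s x) (Ioi 0)
  contX : ∀ t : ℝ, 0 < t → ContDiff ℝ 2 (u t)

/-- `(u₁, u₂)` is a classical solution of the Lotka–Volterra cooperative system
`∂u₁/∂t = d₁ ∂²u₁/∂x² + r₁u₁(1 − u₁ + b₁u₂)`,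
`∂u₂/∂t = d₂ ∂²u₂/∂x² + r₂u₂(1 − u₂ + b₂u₁)`
with initial data `(φ₁, φ₂)`. -/
structure IsLVSolution (d₁ d₂ r₁ r₂ b₁ b₂ : ℝ) (φ₁ φ₂ : ℝ → ℝ) (u₁ u₂ : ℝ → ℝ → ℝ) : Prop where
  reg1 : RegularFn u₁
  reg2 : RegularFn u₂
  pde1 : ∀ t x : ℝ, 0 < t →
    pdT u₁ t x = d₁ * pdXX u₁ t x + r₁ * u₁ t x * (1 - u₁ t x + b₁ * u₂ t x)
  pde2 : ∀ t x : ℝ, 0 < t →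
    pdT u₂ t x = d₂ * pdXX u₂ t x + r₂ * u₂ t x * (1 - u₂ t x + b₂ * u₁ t x)
  init1 : ∀ x : ℝ, u₁ 0 x = φ₁ x
  init2 : ∀ x : ℝ, u₂ 0 x = φ₂ x

set_option maxHeartbeats 1000000

lemma deriv_nonneg_of_left_le (f : ℝ → ℝ) (c a : ℝ) (ha : 0 < a)
    (hf : HasDerivAt f c a) (h : ∀ s ∈ Ico 0 a, f s ≤ f a) : 0 ≤ c := by
  have hs := hasDerivAt_iff_tendsto_slope.mp hf
  have h2 : Tendsto (slope f a) (𝓝[<] a) (𝓝 c) :=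
    hs.mono_left (nhdsWithin_mono _ fun x hx => ne_of_lt hx)
  have hev : ∀ᶠ s in 𝓝[<] a, 0 ≤ slope f a s := by
    filter_upwards [Ioo_mem_nhdsLT_of_mem (⟨ha, le_rfl⟩ : a ∈ Ioc 0 a)] with s hs'
    have h1 : f s ≤ f a := h s ⟨hs'.1.le, hs'.2⟩
    rw [slope_def_field]
    exact div_nonneg_iff.mpr (Or.inr ⟨by linarith, by linarith [hs'.2]⟩)
  exact ge_of_tendsto h2 hev

lemma second_deriv_nonpos_of_isLocalMax {h : ℝ → ℝ} {x₀ : ℝ}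
    (hh : ContDiff ℝ 2 h) (hmax : IsLocalMax h x₀) : deriv (deriv h) x₀ ≤ 0 := by
  by_contra hpos
  push_neg at hpos
  have h1 : deriv h x₀ = 0 := hmax.deriv_eq_zero
  have hd1 : ContDiff ℝ 1 (deriv h) := by
    have h2 : ContDiff ℝ (1+1) h := by
      have : ((1+1 : ℕ) : WithTop ℕ∞) = 1 + 1 := by norm_num
      rw [← this]; exact_mod_cast hh
    exact (contDiff_succ_iff_deriv.mp h2).2.2
  have hdd : HasDerivAt (deriv h) (deriv (deriv h) x₀) x₀ :=
    ((hd1.differentiable one_ne_zero) x₀).hasDerivAt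
  have hslope : Tendsto (slope (deriv h) x₀) (𝓝[>] x₀) (𝓝 (deriv (deriv h) x₀)) :=
    (hasDerivAt_iff_tendsto_slope.mp hdd).mono_left
      (nhdsWithin_mono _ fun x hx => ne_of_gt hx)
  have hev : ∀ᶠ x in 𝓝[>] x₀, 0 < deriv h x := by
    filter_upwards [hslope.eventually (eventually_gt_nhds hpos),
      self_mem_nhdsWithin] with x hx hx'
    rw [slope_def_field, h1, sub_zero] at hx
    rcases div_pos_iff.mp hx with h' | h'
    · exact h'.1
    · have : (0:ℝ) < x - x₀ := sub_pos.2 hx'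
      linarith [h'.2]
  obtain ⟨b, hb, hsub⟩ := mem_nhdsGT_iff_exists_Ioo_subset.mp hev
  have hb' : x₀ < b := hb
  have hmono : StrictMonoOn h (Icc x₀ b) := by
    apply strictMonoOn_of_deriv_pos (convex_Icc _ _) (hh.continuous.continuousOn)
    intro x hx
    rw [interior_Icc] at hx
    exact hsub hx
  have hmem : ∀ᶠ y in 𝓝[>] x₀, y ∈ Ioo x₀ b := Ioo_mem_nhdsGT_of_mem ⟨le_rfl, hb'⟩
  have hle : ∀ᶠ y in 𝓝[>] x₀, h y ≤ h x₀ := hmax.filter_mono nhdsWithin_le_nhds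
  obtain ⟨y, hy1, hy2⟩ := (hmem.and hle).exists
  have : h x₀ < h y := hmono ⟨le_rfl, hb'.le⟩ ⟨hy1.1.le, hy1.2.le⟩ hy1.1
  linarith

lemma ucont_max (u : ℝ → ℝ → ℝ)
    (hu : UniformContinuousOn (fun p : ℝ × ℝ => u p.1 p.2) (Ici 0 ×ˢ (univ : Set ℝ))) :
    Continuous (fun p : ℝ × ℝ => u (max p.1 0) p.2) := by
  have h1 : ContinuousOn (fun p : ℝ × ℝ => u p.1 p.2) (Ici 0 ×ˢ univ) := hu.continuousOn
  have h2 : Continuous (fun p : ℝ × ℝ => ((max p.1 0 : ℝ), p.2)) := by continuity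
  have h3 : ContinuousOn ((fun p : ℝ × ℝ => u p.1 p.2) ∘
      (fun p : ℝ × ℝ => ((max p.1 0 : ℝ), p.2))) univ :=
    h1.comp h2.continuousOn (fun p _ => ⟨mem_Ici.mpr (le_max_right _ _), mem_univ _⟩)
  exact continuousOn_univ.mp h3


lemma core_contradiction
    (d C L δ A p q t' x' : ℝ)
    (hd : 0 < d) (hδ : 0 < δ) (ht : 0 < t') (hL : C + 2*d < L)
    (u : ℝ → ℝ → ℝ) (hreg : RegularFn u)
    (hkey : pdT u t' x' ≤ d * pdXX u t' x' + (p - d*q^2) * (A * Real.exp (p*t'+q*x'))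
        + C * (δ*((1+x'^2)*Real.exp (L*t'))))
    (htouch : u t' x' = A * Real.exp (p*t'+q*x') + δ*((1+x'^2)*Real.exp (L*t')))
    (hbefore : ∀ t ∈ Ico 0 t', u t x' - (A * Real.exp (p*t+q*x') + δ*((1+x'^2)*Real.exp (L*t))) ≤ 0)
    (hmaxloc : IsLocalMax (fun x => u t' x - (A * Real.exp (p*t'+q*x) + δ*((1+x^2)*Real.exp (L*t')))) x') :
    False := by
  have hx2 : ContDiff ℝ 2 (u t') := hreg.contX t' ht
  -- time derivative facts
  have hdiffT : HasDerivAt (fun s => u s x') (pdT u t' x') t' := by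
    have h := (hreg.contT x').differentiableOn one_ne_zero
    exact ((h t' (mem_Ioi.2 ht)).differentiableAt (Ioi_mem_nhds ht)).hasDerivAt
  have hB1 : HasDerivAt (fun t => A * Real.exp (p*t+q*x'))
      (A * (Real.exp (p*t'+q*x') * p)) t' := by
    have h1 : HasDerivAt (fun t : ℝ => p*t+q*x') p t' := by
      simpa using ((hasDerivAt_id t').const_mul p).add_const (q*x')
    exact (h1.exp).const_mul A
  have hB2 : HasDerivAt (fun t => δ*((1+x'^2)*Real.exp (L*t)))
      (δ*((1+x'^2)*(Real.exp (L*t') * L))) t' := by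
    have h1 : HasDerivAt (fun t : ℝ => L*t) L t' := by
      simpa using (hasDerivAt_id t').const_mul L
    exact ((h1.exp).const_mul (1+x'^2)).const_mul δ
  have hf : HasDerivAt
      (fun t => u t x' - (A * Real.exp (p*t+q*x') + δ*((1+x'^2)*Real.exp (L*t))))
      (pdT u t' x' - (A * (Real.exp (p*t'+q*x') * p) + δ*((1+x'^2)*(Real.exp (L*t') * L)))) t' :=
    hdiffT.sub (hB1.add hB2)
  have hT : 0 ≤ pdT u t' x' -
      (A * (Real.exp (p*t'+q*x') * p) + δ*((1+x'^2)*(Real.exp (L*t') * L))) := by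
    apply deriv_nonneg_of_left_le _ _ t' ht hf
    intro s hs
    have h1 := hbefore s hs
    have h2 : u t' x' - (A * Real.exp (p*t'+q*x') + δ*((1+x'^2)*Real.exp (L*t'))) = 0 := by
      rw [htouch]; ring
    linarith
  -- space derivative facts
  have hup : Differentiable ℝ (u t') := hx2.differentiable (by norm_num)
  have hd1 : ContDiff ℝ 1 (deriv (u t')) := by
    have h2 : ContDiff ℝ (1+1) (u t') := by
      have : ((1+1 : ℕ) : WithTop ℕ∞) = 1 + 1 := by norm_num
      rw [← this]; exact_mod_cast hx2
    exact (contDiff_succ_iff_deriv.mp h2).2.2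
  have hEx : ∀ x : ℝ, HasDerivAt (fun y => A * Real.exp (p*t'+q*y))
      (A * (Real.exp (p*t'+q*x) * q)) x := by
    intro x
    have h1 : HasDerivAt (fun y : ℝ => p*t'+q*y) q x := by
      simpa using ((hasDerivAt_id x).const_mul q).const_add (p*t')
    exact (h1.exp).const_mul A
  have hPx : ∀ x : ℝ, HasDerivAt (fun y : ℝ => δ*((1+y^2)*Real.exp (L*t')))
      (δ*((2*x)*Real.exp (L*t'))) x := by
    intro x
    have h1 : HasDerivAt (fun y : ℝ => 1+y^2) (2*x) x := by
      simpa using ((hasDerivAt_pow 2 x).const_add 1)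
    exact (h1.mul_const (Real.exp (L*t'))).const_mul δ
  set h : ℝ → ℝ := fun x => u t' x - (A * Real.exp (p*t'+q*x) + δ*((1+x^2)*Real.exp (L*t'))) with hh_def
  have hhC : ContDiff ℝ 2 h := by
    apply hx2.sub
    have h1 : ContDiff ℝ 2 (fun x : ℝ => A * Real.exp (p*t'+q*x)) := by fun_prop
    have h2 : ContDiff ℝ 2 (fun x : ℝ => δ*((1+x^2)*Real.exp (L*t'))) := by fun_prop
    exact h1.add h2
  have hderiv_h : deriv h = fun x => deriv (u t') x -
      (A * (Real.exp (p*t'+q*x) * q) + δ*((2*x)*Real.exp (L*t'))) := by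
    funext x
    exact (((hup x).hasDerivAt).sub ((hEx x).add (hPx x))).deriv
  have hdd : deriv (deriv h) x' = pdXX u t' x' -
      (A * ((Real.exp (p*t'+q*x') * q) * q) + δ*(2*Real.exp (L*t'))) := by
    rw [hderiv_h]
    have h1 : HasDerivAt (fun x => A * (Real.exp (p*t'+q*x) * q))
        (A * ((Real.exp (p*t'+q*x') * q) * q)) x' := by
      have h2 : HasDerivAt (fun y : ℝ => p*t'+q*y) q x' := by
        simpa using ((hasDerivAt_id x').const_mul q).const_add (p*t')
      exact ((h2.exp).mul_const q).const_mul A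
    have h2 : HasDerivAt (fun x : ℝ => δ*((2*x)*Real.exp (L*t')))
        (δ*(2*Real.exp (L*t'))) x' := by
      have h3 : HasDerivAt (fun x : ℝ => (2*x)*Real.exp (L*t')) (2*Real.exp (L*t')) x' := by
        simpa [mul_comm, mul_assoc] using
          (((hasDerivAt_id x').const_mul 2).mul_const (Real.exp (L*t')))
      exact h3.const_mul δ
    have hud : HasDerivAt (deriv (u t')) (pdXX u t' x') x' :=
      ((hd1.differentiable one_ne_zero) x').hasDerivAt
    exact (hud.sub (h1.add h2)).deriv
  have hX : deriv (deriv h) x' ≤ 0 := second_deriv_nonpos_of_isLocalMax hhC hmaxloc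
  rw [hdd] at hX
  -- combine
  set E := Real.exp (p*t'+q*x') with hE_def
  set EL := Real.exp (L*t') with hEL_def
  have hEpos : 0 < E := Real.exp_pos _
  have hELpos : 0 < EL := Real.exp_pos _
  have hx1 : (1:ℝ) ≤ 1 + x'^2 := by nlinarith [sq_nonneg x']
  -- hT : A*(E*p) + δ*((1+x'^2)*(EL*L)) ≤ pdT
  -- hkey : pdT ≤ d * pdXX + (p - d*q^2)*(A*E) + C*(δ*((1+x'^2)*EL))
  -- hX : pdXX ≤ A*((E*q)*q) + δ*(2*EL)
  have hXle : pdXX u t' x' ≤ A*((E*q)*q) + δ*(2*EL) := by linarith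
  have hchain : A*(E*p) + δ*((1+x'^2)*(EL*L)) ≤
      d*(A*((E*q)*q) + δ*(2*EL)) + (p - d*q^2)*(A*E) + C*(δ*((1+x'^2)*EL)) := by
    nlinarith [hT, hkey, hXle, hd.le]
  have h5 : δ*((1+x'^2)*EL)*L ≤ 2*(d*(δ*EL)) + C*(δ*((1+x'^2)*EL)) := by nlinarith [hchain]
  have h6 : d*(δ*EL) ≤ d*(δ*((1+x'^2)*EL)) := by
    nlinarith [mul_nonneg (mul_nonneg (mul_nonneg hd.le hδ.le) hELpos.le) (sq_nonneg x')]
  have hpos : 0 < δ*((1+x'^2)*EL) := by positivity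
  have h7 : L * (δ*((1+x'^2)*EL)) ≤ (2*d+C) * (δ*((1+x'^2)*EL)) := by nlinarith [h5, h6]
  exact absurd (le_of_mul_le_mul_right h7 hpos) (not_le.mpr (by linarith : 2*d+C < L))


lemma comparison_pair
    (d₁ d₂ C L M A₁ A₂ p₁ p₂ q₁ q₂ : ℝ)
    (hd₁ : 0 < d₁) (hd₂ : 0 < d₂) (hA₁ : 0 < A₁) (hA₂ : 0 < A₂)
    (hL₁ : C + 2*d₁ < L) (hL₂ : C + 2*d₂ < L) (hL0 : 0 < L)
    (u₁ u₂ : ℝ → ℝ → ℝ)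
    (hreg₁ : RegularFn u₁) (hreg₂ : RegularFn u₂)
    (hM₁ : ∀ t x : ℝ, 0 ≤ t → |u₁ t x| ≤ M) (hM₂ : ∀ t x : ℝ, 0 ≤ t → |u₂ t x| ≤ M)
    (key₁ : ∀ t x μ : ℝ, 0 < t → 0 < μ →
        u₁ t x = A₁ * Real.exp (p₁*t + q₁*x) + μ →
        u₂ t x ≤ A₂ * Real.exp (p₂*t + q₂*x) + μ →
        pdT u₁ t x ≤ d₁ * pdXX u₁ t x + (p₁ - d₁*q₁^2) * (A₁ * Real.exp (p₁*t + q₁*x)) + C*μ)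
    (key₂ : ∀ t x μ : ℝ, 0 < t → 0 < μ →
        u₂ t x = A₂ * Real.exp (p₂*t + q₂*x) + μ →
        u₁ t x ≤ A₁ * Real.exp (p₁*t + q₁*x) + μ →
        pdT u₂ t x ≤ d₂ * pdXX u₂ t x + (p₂ - d₂*q₂^2) * (A₂ * Real.exp (p₂*t + q₂*x)) + C*μ)
    (h0₁ : ∀ x : ℝ, u₁ 0 x ≤ A₁ * Real.exp (p₁*0 + q₁*x))
    (h0₂ : ∀ x : ℝ, u₂ 0 x ≤ A₂ * Real.exp (p₂*0 + q₂*x)) :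
    ∀ t x : ℝ, 0 ≤ t → u₁ t x ≤ A₁ * Real.exp (p₁*t + q₁*x) ∧
      u₂ t x ≤ A₂ * Real.exp (p₂*t + q₂*x) := by
  have claim : ∀ δ : ℝ, 0 < δ → ∀ T : ℝ, 0 ≤ T → ∀ t x : ℝ, 0 ≤ t → t ≤ T →
      u₁ t x < A₁ * Real.exp (p₁*t + q₁*x) + δ*((1+x^2)*Real.exp (L*t)) ∧
      u₂ t x < A₂ * Real.exp (p₂*t + q₂*x) + δ*((1+x^2)*Real.exp (L*t)) := by
    intro δ hδ T hT
    by_contra hcon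
    push_neg at hcon
    obtain ⟨t₁, x₁, ht₁0, ht₁T, hbad⟩ := hcon
    have hbad' : A₁ * Real.exp (p₁*t₁ + q₁*x₁) + δ*((1+x₁^2)*Real.exp (L*t₁)) ≤ u₁ t₁ x₁ ∨
        A₂ * Real.exp (p₂*t₁ + q₂*x₁) + δ*((1+x₁^2)*Real.exp (L*t₁)) ≤ u₂ t₁ x₁ := by
      by_cases hc1 : u₁ t₁ x₁ < A₁ * Real.exp (p₁*t₁ + q₁*x₁) + δ*((1+x₁^2)*Real.exp (L*t₁))
      · exact Or.inr (hbad hc1)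
      · exact Or.inl (not_lt.mp hc1)
    clear hbad
    have hM0 : 0 ≤ M := le_trans (abs_nonneg _) (hM₁ 0 0 le_rfl)
    set R : ℝ := Real.sqrt (M/δ) + 1 with hRdef
    have hR0 : 0 < R := by positivity
    have hRsq : M < δ * (1 + R^2) := by
      have h1 : Real.sqrt (M/δ) ^ 2 = M/δ := Real.sq_sqrt (by positivity)
      have h2 : 0 ≤ Real.sqrt (M/δ) := Real.sqrt_nonneg _
      have h4 : δ * (M/δ) = M := by field_simp
      have hRsq2 : R^2 = M/δ + 2*Real.sqrt (M/δ) + 1 := by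
        rw [hRdef, add_sq, h1]; ring
      have h5 : δ*(1+R^2) = δ*(M/δ) + δ*(2*Real.sqrt (M/δ)+2) := by
        rw [hRsq2]; ring
      rw [h5, h4]
      nlinarith [mul_pos hδ (by linarith : (0:ℝ) < 2*Real.sqrt (M/δ)+2)]
    -- far-field negativity
    have hfar : ∀ (w : ℝ → ℝ → ℝ) (A' p' q' : ℝ), 0 < A' →
        (∀ t x : ℝ, 0 ≤ t → |w t x| ≤ M) →
        ∀ t x : ℝ, 0 ≤ t → R ≤ |x| →
        w t x < A' * Real.exp (p'*t + q'*x) + δ*((1+x^2)*Real.exp (L*t)) := by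
      intro w A' p' q' hA' hMw t x ht hx
      have h1 : w t x ≤ M := le_trans (le_abs_self _) (hMw t x ht)
      have h2 : 0 < A' * Real.exp (p'*t + q'*x) := by positivity
      have h3 : (1:ℝ) ≤ Real.exp (L*t) := Real.one_le_exp (mul_nonneg hL0.le ht)
      have h4 : R^2 ≤ x^2 := by
        have h5 := mul_self_le_mul_self hR0.le hx
        have h6 : |x| * |x| = x * x := abs_mul_abs_self x
        nlinarith
      have h1x : (0:ℝ) ≤ 1 + x^2 := by positivity
      have h5 : δ*(1+R^2) ≤ δ*((1+x^2)*Real.exp (L*t)) := by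
        nlinarith [mul_nonneg hδ.le (mul_nonneg h1x (by linarith : (0:ℝ) ≤ Real.exp (L*t) - 1)),
          mul_nonneg hδ.le (sub_nonneg.mpr h4)]
      linarith
    have hfar₁ := hfar u₁ A₁ p₁ q₁ hA₁ hM₁
    have hfar₂ := hfar u₂ A₂ p₂ q₂ hA₂ hM₂
    -- continuous extensions
    have hc₁ : Continuous (fun pr : ℝ × ℝ => u₁ (max pr.1 0) pr.2) := ucont_max u₁ hreg₁.unifCont
    have hc₂ : Continuous (fun pr : ℝ × ℝ => u₂ (max pr.1 0) pr.2) := ucont_max u₂ hreg₂.unifCont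
    obtain ⟨G₁, hG₁def⟩ : ∃ G : ℝ × ℝ → ℝ, ∀ pr : ℝ × ℝ, G pr = u₁ (max pr.1 0) pr.2 -
        (A₁ * Real.exp (p₁*pr.1 + q₁*pr.2) + δ*((1+pr.2^2)*Real.exp (L*pr.1))) :=
      ⟨_, fun _ => rfl⟩
    obtain ⟨G₂, hG₂def⟩ : ∃ G : ℝ × ℝ → ℝ, ∀ pr : ℝ × ℝ, G pr = u₂ (max pr.1 0) pr.2 -
        (A₂ * Real.exp (p₂*pr.1 + q₂*pr.2) + δ*((1+pr.2^2)*Real.exp (L*pr.1))) :=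
      ⟨_, fun _ => rfl⟩
    have hG₁c : Continuous G₁ := by
      have : G₁ = fun pr : ℝ × ℝ => u₁ (max pr.1 0) pr.2 -
        (A₁ * Real.exp (p₁*pr.1 + q₁*pr.2) + δ*((1+pr.2^2)*Real.exp (L*pr.1))) := funext hG₁def
      rw [this]; apply hc₁.sub; fun_prop
    have hG₂c : Continuous G₂ := by
      have : G₂ = fun pr : ℝ × ℝ => u₂ (max pr.1 0) pr.2 -
        (A₂ * Real.exp (p₂*pr.1 + q₂*pr.2) + δ*((1+pr.2^2)*Real.exp (L*pr.1))) := funext hG₂def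
      rw [this]; apply hc₂.sub; fun_prop
    -- the compact set of bad points
    set K : Set (ℝ × ℝ) := Icc (0:ℝ) T ×ˢ Icc (-R) R with hKdef
    have hKc : IsCompact K := isCompact_Icc.prod isCompact_Icc
    set S : Set (ℝ × ℝ) := K ∩ {pr | 0 ≤ G₁ pr ∨ 0 ≤ G₂ pr} with hSdef
    have hSclosed : IsClosed {pr : ℝ × ℝ | 0 ≤ G₁ pr ∨ 0 ≤ G₂ pr} := by
      rw [Set.setOf_or]
      exact (isClosed_le continuous_const hG₁c).union (isClosed_le continuous_const hG₂c)
    have hScpt : IsCompact S := hKc.inter_right hSclosed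
    have hx₁R : |x₁| ≤ R := by
      by_contra hxx
      push_neg at hxx
      rcases hbad' with h | h
      · linarith [hfar₁ t₁ x₁ ht₁0 hxx.le]
      · linarith [hfar₂ t₁ x₁ ht₁0 hxx.le]
    have hSne : S.Nonempty := by
      refine ⟨(t₁, x₁), ⟨⟨ht₁0, ht₁T⟩, ?_⟩, ?_⟩
      · exact abs_le.mp hx₁R
      · rcases hbad' with h | h
        · left
          simp only [hG₁def, Prod.fst, Prod.snd, max_eq_left ht₁0]
          linarith
        · right
          simp only [hG₂def, Prod.fst, Prod.snd, max_eq_left ht₁0]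
          linarith
    obtain ⟨z, hzS, hzmin⟩ := hScpt.exists_isMinOn hSne continuous_fst.continuousOn
    have hzmin' : ∀ w ∈ S, z.1 ≤ w.1 := fun w hw => hzmin hw
    have hzK : z ∈ K := hzS.1
    have hz0 : 0 ≤ z.1 := hzK.1.1
    have hzT : z.1 ≤ T := hzK.1.2
    have hGz : 0 ≤ G₁ z ∨ 0 ≤ G₂ z := hzS.2
    have htpos : 0 < z.1 := by
      rcases eq_or_lt_of_le hz0 with h | h
      · exfalso
        have h2 : 0 < δ*(1+z.2^2) := by positivity
        rcases hGz with hg | hg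
        · have h1 := h0₁ z.2
          rw [hG₁def, ← h] at hg
          simp only [max_self, mul_zero, zero_add, Real.exp_zero, mul_one] at hg h1
          nlinarith [hg, h1, h2]
        · have h1 := h0₂ z.2
          rw [hG₂def, ← h] at hg
          simp only [max_self, mul_zero, zero_add, Real.exp_zero, mul_one] at hg h1
          nlinarith [hg, h1, h2]
      · exact h
    -- strict negativity before time z.1
    have hbef : ∀ t x : ℝ, 0 ≤ t → t < z.1 →
        u₁ t x < A₁ * Real.exp (p₁*t + q₁*x) + δ*((1+x^2)*Real.exp (L*t)) ∧
        u₂ t x < A₂ * Real.exp (p₂*t + q₂*x) + δ*((1+x^2)*Real.exp (L*t)) := by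
      intro t x ht htlt
      constructor
      · by_contra hcb
        push_neg at hcb
        have hxR : |x| ≤ R := by
          by_contra hxx; push_neg at hxx
          linarith [hfar₁ t x ht hxx.le]
        have hmem : (t, x) ∈ S := by
          refine ⟨⟨⟨ht, le_trans htlt.le hzT⟩, abs_le.mp hxR⟩, Or.inl ?_⟩
          simp only [hG₁def, Prod.fst, Prod.snd, max_eq_left ht]
          linarith
        exact absurd (hzmin' _ hmem) (not_le.mpr htlt)
      · by_contra hcb
        push_neg at hcb
        have hxR : |x| ≤ R := by
          by_contra hxx; push_neg at hxx
          linarith [hfar₂ t x ht hxx.le]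
        have hmem : (t, x) ∈ S := by
          refine ⟨⟨⟨ht, le_trans htlt.le hzT⟩, abs_le.mp hxR⟩, Or.inr ?_⟩
          simp only [hG₂def, Prod.fst, Prod.snd, max_eq_left ht]
          linarith
        exact absurd (hzmin' _ hmem) (not_le.mpr htlt)
    -- maxima in space at time z.1
    have hIccNe : (Icc (-R) R).Nonempty := ⟨0, by constructor <;> linarith⟩
    have hcont₁ : ContinuousOn (fun x => G₁ (z.1, x)) (Icc (-R) R) :=
      (hG₁c.comp (continuous_const.prodMk continuous_id)).continuousOn
    have hcont₂ : ContinuousOn (fun x => G₂ (z.1, x)) (Icc (-R) R) :=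
      (hG₂c.comp (continuous_const.prodMk continuous_id)).continuousOn
    obtain ⟨y₁, hy₁mem, hy₁max⟩ := isCompact_Icc.exists_isMaxOn hIccNe hcont₁
    obtain ⟨y₂, hy₂mem, hy₂max⟩ := isCompact_Icc.exists_isMaxOn hIccNe hcont₂
    have hy₁max' : ∀ y ∈ Icc (-R) R, G₁ (z.1, y) ≤ G₁ (z.1, y₁) := fun y hy => hy₁max hy
    have hy₂max' : ∀ y ∈ Icc (-R) R, G₂ (z.1, y) ≤ G₂ (z.1, y₂) := fun y hy => hy₂max hy
    -- the maxima are ≤ 0 by continuity from the left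
    have hlim : ∀ (G : ℝ × ℝ → ℝ), Continuous G →
        (∀ t x : ℝ, 0 ≤ t → t < z.1 → G (t, x) < 0) → ∀ y : ℝ, G (z.1, y) ≤ 0 := by
      intro G hGc hGneg y
      have hg : Continuous (fun t => G (t, y)) := hGc.comp (continuous_id.prodMk continuous_const)
      have htend : Tendsto (fun t => G (t, y)) (𝓝[<] z.1) (𝓝 (G (z.1, y))) :=
        (hg.tendsto _).mono_left nhdsWithin_le_nhds
      apply le_of_tendsto htend
      filter_upwards [Ioo_mem_nhdsLT_of_mem (⟨htpos, le_rfl⟩ : z.1 ∈ Ioc 0 z.1)] with s hs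
      exact (hGneg s y hs.1.le hs.2).le
    have hGneg₁ : ∀ t x : ℝ, 0 ≤ t → t < z.1 → G₁ (t, x) < 0 := by
      intro t x ht htlt
      have := (hbef t x ht htlt).1
      simp only [hG₁def, Prod.fst, Prod.snd, max_eq_left ht]
      linarith
    have hGneg₂ : ∀ t x : ℝ, 0 ≤ t → t < z.1 → G₂ (t, x) < 0 := by
      intro t x ht htlt
      have := (hbef t x ht htlt).2
      simp only [hG₂def, Prod.fst, Prod.snd, max_eq_left ht]
      linarith
    have hm₁ : G₁ (z.1, y₁) ≤ 0 := hlim G₁ hG₁c hGneg₁ y₁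
    have hm₂ : G₂ (z.1, y₂) ≤ 0 := hlim G₂ hG₂c hGneg₂ y₂
    -- one component touches zero at its maximizer
    rcases hGz with hg | hg
    · -- component 1 touches
      have hz2mem : z.2 ∈ Icc (-R) R := hzK.2
      have hm₁0 : G₁ (z.1, y₁) = 0 := le_antisymm hm₁ (le_trans hg (hy₁max' z.2 hz2mem))
      have htouch : u₁ z.1 y₁ = A₁ * Real.exp (p₁*z.1 + q₁*y₁) +
          δ*((1+y₁^2)*Real.exp (L*z.1)) := by
        have := hm₁0
        simp only [hG₁def, Prod.fst, Prod.snd, max_eq_left hz0] at this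
        linarith
      have hother : u₂ z.1 y₁ ≤ A₂ * Real.exp (p₂*z.1 + q₂*y₁) +
          δ*((1+y₁^2)*Real.exp (L*z.1)) := by
        have h1 := hy₂max' y₁ hy₁mem
        have h2 := le_trans h1 hm₂
        simp only [hG₂def, Prod.fst, Prod.snd, max_eq_left hz0] at h2
        linarith
      have hμpos : 0 < δ*((1+y₁^2)*Real.exp (L*z.1)) := by positivity
      have hkey := key₁ z.1 y₁ _ htpos hμpos htouch hother
      have hy₁R : |y₁| < R := by
        rcases lt_or_ge |y₁| R with h | h
        · exact h
        · exfalso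
          have := hfar₁ z.1 y₁ hz0 h
          linarith [htouch]
      have hmaxloc : IsLocalMax (fun x => u₁ z.1 x - (A₁ * Real.exp (p₁*z.1+q₁*x) +
          δ*((1+x^2)*Real.exp (L*z.1)))) y₁ := by
        have hy₁lt : -R < y₁ ∧ y₁ < R := abs_lt.mp hy₁R
        have hIoo : Ioo (-R) R ∈ 𝓝 y₁ := Ioo_mem_nhds hy₁lt.1 hy₁lt.2
        refine Filter.eventually_of_mem hIoo ?_
        intro y hy
        have h := hy₁max' y (Ioo_subset_Icc_self hy)
        rw [hm₁0] at h
        simp only [hG₁def, Prod.fst, Prod.snd, max_eq_left hz0] at h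
        have h0 : u₁ z.1 y₁ - (A₁ * Real.exp (p₁*z.1+q₁*y₁) +
            δ*((1+y₁^2)*Real.exp (L*z.1))) = 0 := by rw [htouch]; ring
        simp only [h0]
        linarith
      have hbefc : ∀ t ∈ Ico 0 z.1, u₁ t y₁ - (A₁ * Real.exp (p₁*t+q₁*y₁) +
          δ*((1+y₁^2)*Real.exp (L*t))) ≤ 0 := by
        intro t ht
        have := (hbef t y₁ ht.1 ht.2).1
        linarith
      exact core_contradiction d₁ C L δ A₁ p₁ q₁ z.1 y₁ hd₁ hδ htpos hL₁ u₁ hreg₁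
        hkey htouch hbefc hmaxloc
    · -- component 2 touches
      have hz2mem : z.2 ∈ Icc (-R) R := hzK.2
      have hm₂0 : G₂ (z.1, y₂) = 0 := le_antisymm hm₂ (le_trans hg (hy₂max' z.2 hz2mem))
      have htouch : u₂ z.1 y₂ = A₂ * Real.exp (p₂*z.1 + q₂*y₂) +
          δ*((1+y₂^2)*Real.exp (L*z.1)) := by
        have := hm₂0
        simp only [hG₂def, Prod.fst, Prod.snd, max_eq_left hz0] at this
        linarith
      have hother : u₁ z.1 y₂ ≤ A₁ * Real.exp (p₁*z.1 + q₁*y₂) +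
          δ*((1+y₂^2)*Real.exp (L*z.1)) := by
        have h1 := hy₁max' y₂ hy₂mem
        have h2 := le_trans h1 hm₁
        simp only [hG₁def, Prod.fst, Prod.snd, max_eq_left hz0] at h2
        linarith
      have hμpos : 0 < δ*((1+y₂^2)*Real.exp (L*z.1)) := by positivity
      have hkey := key₂ z.1 y₂ _ htpos hμpos htouch hother
      have hy₂R : |y₂| < R := by
        rcases lt_or_ge |y₂| R with h | h
        · exact h
        · exfalso
          have := hfar₂ z.1 y₂ hz0 h
          linarith [htouch]
      have hmaxloc : IsLocalMax (fun x => u₂ z.1 x - (A₂ * Real.exp (p₂*z.1+q₂*x) +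
          δ*((1+x^2)*Real.exp (L*z.1)))) y₂ := by
        have hy₂lt : -R < y₂ ∧ y₂ < R := abs_lt.mp hy₂R
        have hIoo : Ioo (-R) R ∈ 𝓝 y₂ := Ioo_mem_nhds hy₂lt.1 hy₂lt.2
        refine Filter.eventually_of_mem hIoo ?_
        intro y hy
        have h := hy₂max' y (Ioo_subset_Icc_self hy)
        rw [hm₂0] at h
        simp only [hG₂def, Prod.fst, Prod.snd, max_eq_left hz0] at h
        have h0 : u₂ z.1 y₂ - (A₂ * Real.exp (p₂*z.1+q₂*y₂) +
            δ*((1+y₂^2)*Real.exp (L*z.1))) = 0 := by rw [htouch]; ring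
        simp only [h0]
        linarith
      have hbefc : ∀ t ∈ Ico 0 z.1, u₂ t y₂ - (A₂ * Real.exp (p₂*t+q₂*y₂) +
          δ*((1+y₂^2)*Real.exp (L*t))) ≤ 0 := by
        intro t ht
        have := (hbef t y₂ ht.1 ht.2).2
        linarith
      exact core_contradiction d₂ C L δ A₂ p₂ q₂ z.1 y₂ hd₂ hδ htpos hL₂ u₂ hreg₂
        hkey htouch hbefc hmaxloc
  -- pass to the limit δ → 0
  intro t x ht
  have hc : 0 < (1+x^2)*Real.exp (L*t) := by positivity
  constructor
  · apply le_of_forall_pos_le_add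
    intro ε hε
    have h := (claim (ε / ((1+x^2)*Real.exp (L*t))) (by positivity) t ht t x ht le_rfl).1
    have h2 : (ε / ((1+x^2)*Real.exp (L*t))) * ((1+x^2)*Real.exp (L*t)) = ε :=
      div_mul_cancel₀ _ hc.ne'
    nlinarith [h, h2]
  · apply le_of_forall_pos_le_add
    intro ε hε
    have h := (claim (ε / ((1+x^2)*Real.exp (L*t))) (by positivity) t ht t x ht le_rfl).2
    have h2 : (ε / ((1+x^2)*Real.exp (L*t))) * ((1+x^2)*Real.exp (L*t)) = ε :=
      div_mul_cancel₀ _ hc.ne'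
    nlinarith [h, h2]


/-- Remark 3.8: if `d₁r₁ > d₂r₂k₂`, then for compactly supported initial data below
`(k₁,k₂)` the solution stays in `[0,k₁] × [0,k₂]` and the spreading of `u₂` is bounded
above by the speed `2√(d₂r₂k₂)`. -/
theorem second_component_spreading_upper_bound
    (d₁ d₂ r₁ r₂ b₁ b₂ : ℝ)
    (hd₁ : 0 < d₁) (hd₂ : 0 < d₂) (hr₁ : 0 < r₁) (hr₂ : 0 < r₂)
    (hb₁ : 0 < b₁) (hb₂ : 0 < b₂) (hbb : b₁ * b₂ < 1)
    (hdr : d₂ * r₂ * ((1 + b₂) / (1 - b₁ * b₂)) < d₁ * r₁)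
    (φ₁ φ₂ : ℝ → ℝ) (hφ₁c : Continuous φ₁) (hφ₂c : Continuous φ₂)
    (hφ₁supp : HasCompactSupport φ₁) (hφ₂supp : HasCompactSupport φ₂)
    (hφ₁ : ∀ x, 0 ≤ φ₁ x ∧ φ₁ x < (1 + b₁) / (1 - b₁ * b₂))
    (hφ₂ : ∀ x, 0 ≤ φ₂ x ∧ φ₂ x < (1 + b₂) / (1 - b₁ * b₂))
    (u₁ u₂ : ℝ → ℝ → ℝ)
    (hu : IsLVSolution d₁ d₂ r₁ r₂ b₁ b₂ φ₁ φ₂ u₁ u₂)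
    (hnn : ∀ t x : ℝ, 0 ≤ t → 0 ≤ u₁ t x ∧ 0 ≤ u₂ t x) :
    (∀ t x : ℝ, 0 ≤ t →
      u₁ t x ≤ (1 + b₁) / (1 - b₁ * b₂) ∧ u₂ t x ≤ (1 + b₂) / (1 - b₁ * b₂)) ∧
    (∀ ε : ℝ, 0 < ε →
      Tendsto (fun t => sSup (u₂ t '' {x : ℝ |
          (2 * Real.sqrt (d₂ * r₂ * ((1 + b₂) / (1 - b₁ * b₂))) + ε) * t ≤ |x|}))
        atTop (𝓝 0)) := by
  have hb : 0 < 1 - b₁ * b₂ := by linarith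
  set k₁ : ℝ := (1 + b₁) / (1 - b₁ * b₂) with hk₁def
  set k₂ : ℝ := (1 + b₂) / (1 - b₁ * b₂) with hk₂def
  have hk₁ : 0 < k₁ := by rw [hk₁def]; positivity
  have hk₂ : 0 < k₂ := by rw [hk₂def]; positivity
  obtain ⟨M₁, hM₁⟩ := hu.reg1.bounded
  obtain ⟨M₂, hM₂⟩ := hu.reg2.bounded
  set M : ℝ := max M₁ M₂ with hMdef
  have hM₁' : ∀ t x : ℝ, 0 ≤ t → |u₁ t x| ≤ M := fun t x ht =>
    le_trans (hM₁ t x ht) (le_max_left _ _)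
  have hM₂' : ∀ t x : ℝ, 0 ≤ t → |u₂ t x| ≤ M := fun t x ht =>
    le_trans (hM₂ t x ht) (le_max_right _ _)
  have hM0 : 0 ≤ M := le_trans (abs_nonneg _) (hM₁' 0 0 le_rfl)
  set C : ℝ := r₁ * M * b₁ + r₂ * M * b₂ with hCdef
  have hC0 : 0 ≤ C := by rw [hCdef]; positivity
  set L : ℝ := C + 2*d₁ + 2*d₂ + 1 with hLdef
  -- PART 1 : invariant region
  have hkk₁ : 1 - k₁ + b₁ * k₂ = 0 := by
    rw [hk₁def, hk₂def]; field_simp; ring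
  have hkk₂ : 1 + b₂ * k₁ = k₂ := by
    rw [hk₁def, hk₂def, mul_div_assoc', eq_div_iff hb.ne', add_mul, div_mul_cancel₀ _ hb.ne']; ring
  have key₁ : ∀ t x μ : ℝ, 0 < t → 0 < μ →
      u₁ t x = k₁ * Real.exp ((0:ℝ)*t + (0:ℝ)*x) + μ →
      u₂ t x ≤ k₂ * Real.exp ((0:ℝ)*t + (0:ℝ)*x) + μ →
      pdT u₁ t x ≤ d₁ * pdXX u₁ t x + ((0:ℝ) - d₁*(0:ℝ)^2) * (k₁ * Real.exp ((0:ℝ)*t + (0:ℝ)*x)) + C*μ := by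
    intro t x μ ht hμ htouch hother
    have hsim : Real.exp ((0:ℝ)*t + (0:ℝ)*x) = 1 := by norm_num
    rw [hsim, mul_one] at htouch hother
    rw [hsim]
    rw [hu.pde1 t x ht]
    have hu₁0 : 0 ≤ u₁ t x := (hnn t x ht.le).1
    have hu₂0 : 0 ≤ u₂ t x := (hnn t x ht.le).2
    have hu₁M : u₁ t x ≤ M := le_trans (le_abs_self _) (hM₁' t x ht.le)
    have hfac : 1 - u₁ t x + b₁ * u₂ t x ≤ (b₁ - 1) * μ := by
      rw [htouch]
      nlinarith [mul_le_mul_of_nonneg_left hother hb₁.le, hkk₁]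
    have hreac : r₁ * u₁ t x * (1 - u₁ t x + b₁ * u₂ t x) ≤ C * μ := by
      have hCμ : 0 ≤ C * μ := mul_nonneg hC0 hμ.le
      rcases le_or_gt (1 - u₁ t x + b₁ * u₂ t x) 0 with hf | hf
      · have h1 : r₁ * u₁ t x * (1 - u₁ t x + b₁ * u₂ t x) ≤ 0 :=
          mul_nonpos_of_nonneg_of_nonpos (by positivity) hf
        linarith
      · have h1 : r₁ * u₁ t x * (1 - u₁ t x + b₁ * u₂ t x) ≤ r₁ * u₁ t x * ((b₁-1)*μ) :=
          mul_le_mul_of_nonneg_left hfac (by positivity)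
        have h2 : r₁ * u₁ t x * ((b₁-1)*μ) ≤ r₁*M*b₁*μ := by
          nlinarith [mul_nonneg (mul_nonneg hr₁.le hu₁0) hμ.le,
            mul_le_mul_of_nonneg_right
              (mul_le_mul_of_nonneg_right (mul_le_mul_of_nonneg_left hu₁M hr₁.le) hb₁.le) hμ.le]
        have h3 : r₁*M*b₁*μ ≤ C*μ := by
          rw [hCdef]
          nlinarith [mul_nonneg (mul_nonneg (mul_nonneg hr₂.le hM0) hb₂.le) hμ.le]
        linarith
    nlinarith [hreac]
  have key₂ : ∀ t x μ : ℝ, 0 < t → 0 < μ →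
      u₂ t x = k₂ * Real.exp ((0:ℝ)*t + (0:ℝ)*x) + μ →
      u₁ t x ≤ k₁ * Real.exp ((0:ℝ)*t + (0:ℝ)*x) + μ →
      pdT u₂ t x ≤ d₂ * pdXX u₂ t x + ((0:ℝ) - d₂*(0:ℝ)^2) * (k₂ * Real.exp ((0:ℝ)*t + (0:ℝ)*x)) + C*μ := by
    intro t x μ ht hμ htouch hother
    have hsim : Real.exp ((0:ℝ)*t + (0:ℝ)*x) = 1 := by norm_num
    rw [hsim, mul_one] at htouch hother
    rw [hsim]
    rw [hu.pde2 t x ht]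
    have hu₁0 : 0 ≤ u₁ t x := (hnn t x ht.le).1
    have hu₂0 : 0 ≤ u₂ t x := (hnn t x ht.le).2
    have hu₂M : u₂ t x ≤ M := le_trans (le_abs_self _) (hM₂' t x ht.le)
    have hkk₂' : 1 - k₂ + b₂ * k₁ = 0 := by
      linarith [hkk₂]
    have hfac : 1 - u₂ t x + b₂ * u₁ t x ≤ (b₂ - 1) * μ := by
      rw [htouch]
      nlinarith [mul_le_mul_of_nonneg_left hother hb₂.le, hkk₂']
    have hreac : r₂ * u₂ t x * (1 - u₂ t x + b₂ * u₁ t x) ≤ C * μ := by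
      have hCμ : 0 ≤ C * μ := mul_nonneg hC0 hμ.le
      rcases le_or_gt (1 - u₂ t x + b₂ * u₁ t x) 0 with hf | hf
      · have h1 : r₂ * u₂ t x * (1 - u₂ t x + b₂ * u₁ t x) ≤ 0 :=
          mul_nonpos_of_nonneg_of_nonpos (by positivity) hf
        linarith
      · have h1 : r₂ * u₂ t x * (1 - u₂ t x + b₂ * u₁ t x) ≤ r₂ * u₂ t x * ((b₂-1)*μ) :=
          mul_le_mul_of_nonneg_left hfac (by positivity)
        have h2 : r₂ * u₂ t x * ((b₂-1)*μ) ≤ r₂*M*b₂*μ := by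
          nlinarith [mul_nonneg (mul_nonneg hr₂.le hu₂0) hμ.le,
            mul_le_mul_of_nonneg_right
              (mul_le_mul_of_nonneg_right (mul_le_mul_of_nonneg_left hu₂M hr₂.le) hb₂.le) hμ.le]
        have h3 : r₂*M*b₂*μ ≤ C*μ := by
          rw [hCdef]
          nlinarith [mul_nonneg (mul_nonneg (mul_nonneg hr₁.le hM0) hb₁.le) hμ.le]
        linarith
    nlinarith [hreac]
  have h0₁ : ∀ x : ℝ, u₁ 0 x ≤ k₁ * Real.exp ((0:ℝ)*0 + (0:ℝ)*x) := by
    intro x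
    have hsim : Real.exp ((0:ℝ)*0 + (0:ℝ)*x) = 1 := by norm_num
    rw [hsim, mul_one, hu.init1 x]
    exact (hφ₁ x).2.le
  have h0₂ : ∀ x : ℝ, u₂ 0 x ≤ k₂ * Real.exp ((0:ℝ)*0 + (0:ℝ)*x) := by
    intro x
    have hsim : Real.exp ((0:ℝ)*0 + (0:ℝ)*x) = 1 := by norm_num
    rw [hsim, mul_one, hu.init2 x]
    exact (hφ₂ x).2.le
  have part1 : ∀ t x : ℝ, 0 ≤ t → u₁ t x ≤ k₁ ∧ u₂ t x ≤ k₂ := by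
    have hcomp := comparison_pair d₁ d₂ C L M k₁ k₂ 0 0 0 0 hd₁ hd₂ hk₁ hk₂
      (by rw [hLdef]; linarith) (by rw [hLdef]; linarith) (by rw [hLdef]; linarith)
      u₁ u₂ hu.reg1 hu.reg2 hM₁' hM₂' key₁ key₂ h0₁ h0₂
    intro t x ht
    have h := hcomp t x ht
    have hsim : Real.exp ((0:ℝ)*t + (0:ℝ)*x) = 1 := by norm_num
    rw [hsim, mul_one, mul_one] at h
    exact h
  refine ⟨part1, ?_⟩
  -- PART 2 : spreading bound
  have hrk : 0 < r₂ * k₂ := by positivity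
  set lam : ℝ := Real.sqrt (r₂*k₂/d₂) with hlamdef
  have hlam : 0 < lam := by rw [hlamdef]; exact Real.sqrt_pos.mpr (by positivity)
  have hlamsq : lam^2 = r₂*k₂/d₂ := by rw [hlamdef]; exact Real.sq_sqrt (by positivity)
  have hdlam : d₂ * lam^2 = r₂*k₂ := by rw [hlamsq]; field_simp
  set c : ℝ := 2 * Real.sqrt (d₂*r₂*k₂) with hcdef
  have hc0 : 0 ≤ c := by rw [hcdef]; positivity
  set p : ℝ := 2*(r₂*k₂) with hpdef
  have hlc : p = lam * c := by
    rw [hpdef, hcdef, hlamdef]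
    have h1 : Real.sqrt (r₂*k₂/d₂) * Real.sqrt (d₂*r₂*k₂) = r₂*k₂ := by
      rw [← Real.sqrt_mul (by positivity)]
      rw [show r₂*k₂/d₂*(d₂*r₂*k₂) = (r₂*k₂)^2 by field_simp]
      exact Real.sqrt_sq hrk.le
    nlinarith [h1]
  -- support radius for φ₂
  obtain ⟨r₀, hr₀⟩ := hφ₂supp.isBounded.subset_closedBall 0
  set R₀ : ℝ := max r₀ 0 with hR₀def
  have hR₀0 : 0 ≤ R₀ := le_max_right _ _
  have hφ₂out : ∀ x : ℝ, R₀ < |x| → φ₂ x = 0 := by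
    intro x hx
    by_contra hne
    have hxs : x ∈ tsupport φ₂ := subset_tsupport φ₂ (by simpa [Function.mem_support] using hne)
    have := hr₀ hxs
    rw [Metric.mem_closedBall, Real.dist_eq, sub_zero] at this
    have : |x| ≤ R₀ := le_trans this (le_max_left _ _)
    linarith
  set A : ℝ := k₂ * Real.exp (lam*R₀) with hAdef
  have hA : 0 < A := by rw [hAdef]; positivity
  -- initial comparison for both exponentials
  have h0exp : ∀ q : ℝ, q = lam ∨ q = -lam → ∀ x : ℝ,
      u₂ 0 x ≤ A * Real.exp (p*0 + q*x) := by
    intro q hq x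
    rw [hu.init2 x]
    have hAe : A * Real.exp (p*0 + q*x) = k₂ * Real.exp (lam*R₀ + q*x) := by
      rw [hAdef, mul_assoc, ← Real.exp_add]
      norm_num
    rw [hAe]
    rcases le_or_gt |x| R₀ with hxR | hxR
    · have h1 : 0 ≤ lam*R₀ + q*x := by
        rcases hq with h | h <;> rw [h]
        · nlinarith [neg_abs_le x, hlam.le, hxR]
        · nlinarith [le_abs_self x, hlam.le, hxR]
      have h2 : (1:ℝ) ≤ Real.exp (lam*R₀ + q*x) := Real.one_le_exp h1
      nlinarith [(hφ₂ x).2, hk₂]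
    · rw [hφ₂out x hxR]
      positivity
  -- the key inequality for u₂ with linearized reaction
  have key2' : ∀ q : ℝ, q = lam ∨ q = -lam → ∀ t x μ : ℝ, 0 < t → 0 < μ →
      u₂ t x = A * Real.exp (p*t + q*x) + μ →
      pdT u₂ t x ≤ d₂ * pdXX u₂ t x + (p - d₂*q^2) * (A * Real.exp (p*t + q*x)) + (r₂*k₂)*μ := by
    intro q hq t x μ ht hμ htouch
    rw [hu.pde2 t x ht]
    have hu₂0 : 0 ≤ u₂ t x := (hnn t x ht.le).2
    have hu₁k : u₁ t x ≤ k₁ := (part1 t x ht.le).1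
    have hq2 : q^2 = lam^2 := by rcases hq with h | h <;> rw [h] <;> ring
    have hpq : p - d₂*q^2 = r₂*k₂ := by rw [hq2, hdlam, hpdef]; ring
    have hfac : 1 - u₂ t x + b₂ * u₁ t x ≤ k₂ := by
      nlinarith [mul_le_mul_of_nonneg_left hu₁k hb₂.le, hkk₂]
    have h1 : r₂ * u₂ t x * (1 - u₂ t x + b₂ * u₁ t x) ≤ r₂ * u₂ t x * k₂ :=
      mul_le_mul_of_nonneg_left hfac (by positivity)
    have h2 : r₂ * u₂ t x * k₂ = (r₂*k₂) * (A * Real.exp (p*t + q*x)) + (r₂*k₂)*μ := by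
      rw [htouch]; ring
    rw [hpq]
    linarith
  set L₂ : ℝ := r₂*k₂ + 2*d₂ + 1 with hL₂def
  have hcompNeg : ∀ t x : ℝ, 0 ≤ t → u₂ t x ≤ A * Real.exp (p*t + (-lam)*x) := by
    have h := comparison_pair d₂ d₂ (r₂*k₂) L₂ M A A p p (-lam) (-lam) hd₂ hd₂ hA hA
      (by rw [hL₂def]; linarith) (by rw [hL₂def]; linarith) (by rw [hL₂def]; positivity)
      u₂ u₂ hu.reg2 hu.reg2 hM₂' hM₂'
      (fun t x μ ht hμ htouch _ => key2' (-lam) (Or.inr rfl) t x μ ht hμ htouch)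
      (fun t x μ ht hμ htouch _ => key2' (-lam) (Or.inr rfl) t x μ ht hμ htouch)
      (h0exp (-lam) (Or.inr rfl)) (h0exp (-lam) (Or.inr rfl))
    exact fun t x ht => (h t x ht).1
  have hcompPos : ∀ t x : ℝ, 0 ≤ t → u₂ t x ≤ A * Real.exp (p*t + lam*x) := by
    have h := comparison_pair d₂ d₂ (r₂*k₂) L₂ M A A p p lam lam hd₂ hd₂ hA hA
      (by rw [hL₂def]; linarith) (by rw [hL₂def]; linarith) (by rw [hL₂def]; positivity)
      u₂ u₂ hu.reg2 hu.reg2 hM₂' hM₂'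
      (fun t x μ ht hμ htouch _ => key2' lam (Or.inl rfl) t x μ ht hμ htouch)
      (fun t x μ ht hμ htouch _ => key2' lam (Or.inl rfl) t x μ ht hμ htouch)
      (h0exp lam (Or.inl rfl)) (h0exp lam (Or.inl rfl))
    exact fun t x ht => (h t x ht).1
  -- assembling the limit
  intro ε hε
  have hbound : ∀ t : ℝ, 0 ≤ t → ∀ y ∈ u₂ t '' {x : ℝ | (c + ε) * t ≤ |x|},
      y ≤ A * Real.exp (-(lam*ε)*t) := by
    rintro t ht y ⟨x, hx, rfl⟩
    have hx' : (c + ε) * t ≤ |x| := hx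
    have h1 : u₂ t x ≤ A * Real.exp (p*t - lam*|x|) := by
      rcases le_or_gt 0 x with h | h
      · have h2 := hcompNeg t x ht
        rw [abs_of_nonneg h]
        calc u₂ t x ≤ A * Real.exp (p*t + (-lam)*x) := h2
          _ = A * Real.exp (p*t - lam*x) := by ring_nf
      · have h2 := hcompPos t x ht
        rw [abs_of_neg h]
        calc u₂ t x ≤ A * Real.exp (p*t + lam*x) := h2
          _ = A * Real.exp (p*t - lam*(-x)) := by ring_nf
    have h2 : p*t - lam*|x| ≤ -(lam*ε)*t := by
      have h3 : lam * ((c + ε) * t) ≤ lam * |x| := mul_le_mul_of_nonneg_left hx' hlam.le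
      have h4 : p*t = lam*(c*t) := by rw [hlc]; ring
      have h5 : lam*((c+ε)*t) = lam*(c*t) + lam*ε*t := by ring
      have h6 : -(lam*ε)*t = -(lam*ε*t) := by ring
      rw [h6]
      linarith only [h3, h4, h5]
    calc u₂ t x ≤ A * Real.exp (p*t - lam*|x|) := h1
      _ ≤ A * Real.exp (-(lam*ε)*t) :=
        mul_le_mul_of_nonneg_left (Real.exp_le_exp.mpr h2) hA.le
  have hwit : ∀ t : ℝ, 0 ≤ t → u₂ t ((c + ε) * t + 1) ∈
      u₂ t '' {x : ℝ | (c + ε) * t ≤ |x|} := by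
    intro t ht
    refine ⟨(c + ε) * t + 1, ?_, rfl⟩
    have h1 : 0 ≤ (c + ε) * t := mul_nonneg (by linarith) ht
    have h2 : |(c + ε) * t + 1| = (c + ε) * t + 1 := abs_of_nonneg (by linarith)
    simp only [Set.mem_setOf_eq, h2]
    linarith
  have hub : ∀ᶠ t in atTop, sSup (u₂ t '' {x : ℝ | (c + ε) * t ≤ |x|}) ≤
      A * Real.exp (-(lam*ε)*t) := by
    filter_upwards [eventually_ge_atTop (0:ℝ)] with t ht
    exact Real.sSup_le (hbound t ht) (by positivity)
  have hlb : ∀ᶠ t in atTop, 0 ≤ sSup (u₂ t '' {x : ℝ | (c + ε) * t ≤ |x|}) := by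
    filter_upwards [eventually_ge_atTop (0:ℝ)] with t ht
    have hbdd : BddAbove (u₂ t '' {x : ℝ | (c + ε) * t ≤ |x|}) :=
      ⟨A * Real.exp (-(lam*ε)*t), fun y hy => hbound t ht y hy⟩
    have h1 := le_csSup hbdd (hwit t ht)
    have h2 : 0 ≤ u₂ t ((c + ε) * t + 1) := (hnn t _ ht).2
    linarith
  have hg0 : Tendsto (fun t : ℝ => A * Real.exp (-(lam*ε)*t)) atTop (𝓝 0) := by
    have h1 : Tendsto (fun t : ℝ => (lam*ε)*t) atTop atTop :=
      Tendsto.const_mul_atTop (by positivity) tendsto_id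
    have h2 : Tendsto (fun t : ℝ => Real.exp (-((lam*ε)*t))) atTop (𝓝 0) :=
      Real.tendsto_exp_neg_atTop_nhds_zero.comp h1
    have h3 : Tendsto (fun t : ℝ => A * Real.exp (-((lam*ε)*t))) atTop (𝓝 (A * 0)) :=
      h2.const_mul A
    rw [mul_zero] at h3
    convert h3 using 2 with t
    ring_nf
  exact squeeze_zero' hlb hub hg0
end

section
/- Let d > 0 and δ ∈ (0,1), and let f : ℝ × ℝ × [0,∞) → ℝ satisfy: f(t,x,0) = 0 for all (t,x); f is locally Lipschitz continuous in u uniformly in (t,x); there is β₀ > 0 such that f is continuously differentiable in u on [0,β₀] uniformly with respect to (t,x); and f is locally Hölder continuous of exponents (δ/2, δ) in (t,x), locally in u. Suppose the generalized principal eigenvalue is negative, i.e., there exist λ < 0 and a function φ : ℝ × ℝ → ℝ, continuously differentiable in t and twice continuously differentiable in x, bounded together with its first derivatives, with inf φ > 0, such that ∂φ/∂t − d ∂²φ/∂x² − (∂f/∂u)(t,x,0)·φ ≤ λφ on ℝ × ℝ. Let u : [0,∞) × ℝ → ℝ be a positive bounded classical solution of ∂u/∂t = d ∂²u/∂x² +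 f(t,x,u) on (0,∞) × ℝ, and let r : [0,∞) → (0,∞) be of class C^{1+δ/2} with sup_{t≥0}|r'(t)| < ∞. If liminf_{t→∞} u(t, r(t)) > 0 and liminf_{t→∞} u(t, −r(t)) > 0, then liminf_{t→∞} inf_{|x| ≤ r(t)} u(t,x) > 0. -/
open Real Set Filter Topology MeasureTheory

/-- `z` is a classical solution of the Fisher equation
`∂z/∂t = d ∂²z/∂x² + r z (1 − z/K)` with initial datum `z₀`. -/
structure IsFisherSolution (d r K : ℝ) (z₀ : ℝ → ℝ) (z : ℝ → ℝ → ℝ) : Prop where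
  reg : RegularFn z
  pde : ∀ t x : ℝ, 0 < t → pdT z t x = d * pdXX z t x + r * z t x * (1 - z t x / K)
  init : ∀ x : ℝ, z 0 x = z₀ x


/-- If `H` has derivative `a` at `t₀` and `H t₀ ≤ H t` on a left interval, then `a ≤ 0`. -/
lemma left_deriv_nonpos {H : ℝ → ℝ} {t₀ s₁ a : ℝ} (hH : HasDerivAt H a t₀)
    (hs : s₁ < t₀) (hmin : ∀ t ∈ Ioo s₁ t₀, H t₀ ≤ H t) : a ≤ 0 := by
  have hW : HasDerivWithinAt H a (Ioo s₁ t₀) t₀ := hH.hasDerivWithinAt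
  have hslope := hasDerivWithinAt_iff_tendsto_slope.mp hW
  have hne : (𝓝[Ioo s₁ t₀ \ {t₀}] t₀).NeBot := by
    have : Ioo s₁ t₀ \ {t₀} = Ioo s₁ t₀ := by
      ext y; simp only [mem_diff, mem_singleton_iff, mem_Ioo, and_iff_left_iff_imp]
      rintro ⟨_, h2⟩; exact ne_of_lt h2
    rw [this]
    refine mem_closure_iff_nhdsWithin_neBot.mp ?_
    rw [closure_Ioo (ne_of_lt hs)]
    exact ⟨le_of_lt hs, le_refl t₀⟩
  refine le_of_tendsto hslope ?_
  filter_upwards [self_mem_nhdsWithin] with t ht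
  obtain ⟨htI, -⟩ := ht
  have h1 : H t₀ ≤ H t := hmin t htI
  have h2 : t - t₀ < 0 := sub_neg.mpr htI.2
  rw [slope_def_field]
  have : (H t - H t₀) / (t - t₀) ≤ 0 :=
    div_nonpos_of_nonneg_of_nonpos (by linarith) (le_of_lt h2)
  simpa [div_eq_inv_mul] using this

/-- Second derivative test at an interior minimum. -/
lemma second_deriv_nonneg_at_min {g : ℝ → ℝ} {a b x₀ : ℝ} (hg : ContDiff ℝ 2 g)
    (hab : x₀ ∈ Ioo a b) (hmin : ∀ x ∈ Icc a b, g x₀ ≤ g x) :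
    0 ≤ deriv (deriv g) x₀ := by
  by_contra hc
  push_neg at hc
  have hd1 : Differentiable ℝ g := hg.differentiable (by simp)
  have hd2 : Differentiable ℝ (deriv g) := by
    have h2 : ContDiff ℝ (1 + 1 : WithTop ℕ∞) g := by
      exact_mod_cast hg
    exact (contDiff_succ_iff_deriv.mp h2).2.2.differentiable one_ne_zero
  -- deriv g x₀ = 0
  have hloc : IsLocalMin g x₀ := by
    have : Ioo a b ∈ 𝓝 x₀ := Ioo_mem_nhds hab.1 hab.2
    filter_upwards [this] with y hy
    exact hmin y (Ioo_subset_Icc_self hy)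
  have hderiv0 : deriv g x₀ = 0 := hloc.deriv_eq_zero
  -- slope of deriv g tends to deriv (deriv g) x₀ < 0
  have hHD : HasDerivAt (deriv g) (deriv (deriv g) x₀) x₀ := (hd2 x₀).hasDerivAt
  have hsl := hasDerivAt_iff_tendsto_slope.mp hHD
  set c := deriv (deriv g) x₀ with hcdef
  have hev : ∀ᶠ x in 𝓝[≠] x₀, slope (deriv g) x₀ x < c / 2 := by
    exact hsl.eventually (eventually_lt_nhds (show c < c / 2 by linarith))
  have hev' : ∀ᶠ x in 𝓝[>] x₀, slope (deriv g) x₀ x < c / 2 :=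
    hev.filter_mono (nhdsWithin_mono _ (fun y hy => ne_of_gt hy))
  obtain ⟨w, hw, hIoo⟩ := (mem_nhdsGT_iff_exists_Ioo_subset).mp hev'
  -- choose endpoint within (x₀, b]
  set w' := min w b with hw'def
  have hx₀w' : x₀ < w' := lt_min hw hab.2
  -- deriv g < 0 on Ioo x₀ w'
  have hneg : ∀ x ∈ interior (Icc x₀ w'), deriv g x < 0 := by
    intro x hx
    rw [interior_Icc] at hx
    have hxw : x ∈ Ioo x₀ w := ⟨hx.1, lt_of_lt_of_le hx.2 (min_le_left _ _)⟩
    have := hIoo hxw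
    simp only [mem_setOf_eq, slope_def_field] at this
    rw [hderiv0, sub_zero] at this
    have hpos : 0 < x - x₀ := sub_pos.mpr hx.1
    have : deriv g x < c / 2 * (x - x₀) := by
      rw [div_lt_iff₀ hpos] at this
      linarith [this]
    have hcx : c / 2 * (x - x₀) < 0 := mul_neg_of_neg_of_pos (by linarith) hpos
    linarith
  have hanti : StrictAntiOn g (Icc x₀ w') :=
    strictAntiOn_of_deriv_neg (convex_Icc _ _) hd1.continuous.continuousOn hneg
  have hmem1 : x₀ ∈ Icc x₀ w' := ⟨le_refl _, le_of_lt hx₀w'⟩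
  have hmem2 : w' ∈ Icc x₀ w' := ⟨le_of_lt hx₀w', le_refl _⟩
  have : g w' < g x₀ := hanti hmem1 hmem2 hx₀w'
  have hwIcc : w' ∈ Icc a b :=
    ⟨le_trans (le_of_lt hab.1) (le_of_lt hx₀w'), min_le_right _ _⟩
  exact absurd (hmin w' hwIcc) (by linarith)

lemma differentiable_deriv_of_contDiff_two {g : ℝ → ℝ} (hg : ContDiff ℝ 2 g) :
    Differentiable ℝ (deriv g) := by
  have h2 : ContDiff ℝ (1 + 1 : WithTop ℕ∞) g := by exact_mod_cast hg
  exact (contDiff_succ_iff_deriv.mp h2).2.2.differentiable one_ne_zero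

/-- Lemma 2.7 (Berestycki–Hamel–Nadin): for a nonautonomous reaction–diffusion equation
with negative generalized principal eigenvalue, if a solution stays bounded away from `0`
along `±r(t)` for an admissible family of radii `r`, then it stays bounded away from `0`
uniformly on `[-r(t), r(t)]`. -/
theorem propagation_between_spreading_radii
    (d δ : ℝ) (hd : 0 < d) (hδ : δ ∈ Ioo (0 : ℝ) 1)
    (f : ℝ → ℝ → ℝ → ℝ)
    (hf0 : ∀ t x : ℝ, f t x 0 = 0)
    (hflip : ∀ M : ℝ, 0 < M → ∃ L : ℝ, ∀ t x : ℝ, ∀ v ∈ Icc (0 : ℝ) M, ∀ w ∈ Icc (0 : ℝ) M,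
      |f t x v - f t x w| ≤ L * |v - w|)
    (β₀ : ℝ) (hβ₀ : 0 < β₀)
    (hfC1 : ∀ t x : ℝ, ContDiffOn ℝ 1 (f t x) (Icc 0 β₀))
    (hfC1unif : ∀ ε : ℝ, 0 < ε → ∃ η : ℝ, 0 < η ∧ ∀ t x : ℝ,
      ∀ v ∈ Icc (0 : ℝ) β₀, ∀ w ∈ Icc (0 : ℝ) β₀, |v - w| < η →
      |derivWithin (f t x) (Icc 0 β₀) v - derivWithin (f t x) (Icc 0 β₀) w| < ε)
    (hfHolder : ∀ K : Set (ℝ × ℝ), IsCompact K → ∀ M : ℝ, 0 < M → ∃ C : ℝ,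
      ∀ p ∈ K, ∀ q ∈ K, ∀ v ∈ Icc (0 : ℝ) M,
      |f p.1 p.2 v - f q.1 q.2 v| ≤ C * (|p.1 - q.1| ^ (δ / 2) + |p.2 - q.2| ^ δ))
    (lam : ℝ) (hlam : lam < 0)
    (φ : ℝ → ℝ → ℝ)
    (hφT : ∀ x : ℝ, ContDiff ℝ 1 (fun s => φ s x))
    (hφX : ∀ t : ℝ, ContDiff ℝ 2 (φ t))
    (hφbdd : ∃ M : ℝ, ∀ t x : ℝ, |φ t x| ≤ M ∧ |pdT φ t x| ≤ M ∧ |deriv (φ t) x| ≤ M)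
    (hφinf : ∃ m : ℝ, 0 < m ∧ ∀ t x : ℝ, m ≤ φ t x)
    (hφeig : ∀ t x : ℝ,
      pdT φ t x - d * pdXX φ t x - derivWithin (f t x) (Ici 0) 0 * φ t x ≤ lam * φ t x)
    (u : ℝ → ℝ → ℝ) (hureg : RegularFn u)
    (hupos : ∀ t x : ℝ, 0 ≤ t → 0 < u t x)
    (hupde : ∀ t x : ℝ, 0 < t → pdT u t x = d * pdXX u t x + f t x (u t x))
    (r : ℝ → ℝ) (hrpos : ∀ t : ℝ, 0 ≤ t → 0 < r t)
    (hrC1 : ContDiffOn ℝ 1 r (Ici 0))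
    (hrHolder : ∃ C : ℝ, ∀ s ∈ Ici (0 : ℝ), ∀ t ∈ Ici (0 : ℝ),
      |derivWithin r (Ici 0) s - derivWithin r (Ici 0) t| ≤ C * |s - t| ^ (δ / 2))
    (hr' : ∃ B : ℝ, ∀ t ∈ Ici (0 : ℝ), |derivWithin r (Ici 0) t| ≤ B)
    (h1 : 0 < liminf (fun t => u t (r t)) atTop)
    (h2 : 0 < liminf (fun t => u t (-(r t))) atTop) :
    0 < liminf (fun t => sInf (u t '' Icc (-(r t)) (r t))) atTop := by
  classical
  obtain ⟨M, hM⟩ := hφbdd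
  obtain ⟨m, hm, hmφ⟩ := hφinf
  obtain ⟨Mu, hMu⟩ := hureg.bounded
  set Mφ : ℝ := max M 1 with hMφdef
  have hMφpos : 0 < Mφ := lt_of_lt_of_le one_pos (le_max_right _ _)
  have hφle : ∀ t x : ℝ, φ t x ≤ Mφ := fun t x =>
    le_trans (le_trans (le_abs_self _) (hM t x).1) (le_max_left _ _)
  -- σ and the uniform C¹ modulus
  set σ : ℝ := -lam / 2 with hσdef
  have hσpos : 0 < σ := by simp [hσdef]; linarith
  obtain ⟨η', hη'pos, hη'⟩ := hfC1unif σ hσpos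
  -- joint continuity of φ
  have hφlipT : ∀ x : ℝ, ∀ t s : ℝ, |φ t x - φ s x| ≤ Mφ * |t - s| := by
    intro x t s
    have hdiff : Differentiable ℝ (fun s => φ s x) := (hφT x).differentiable one_ne_zero
    have hlip : LipschitzWith (Real.toNNReal Mφ) (fun s => φ s x) := by
      apply lipschitzWith_of_nnnorm_deriv_le hdiff
      intro t
      rw [← NNReal.coe_le_coe, coe_nnnorm, Real.coe_toNNReal _ hMφpos.le, Real.norm_eq_abs]
      exact le_trans (hM t x).2.1 (le_max_left _ _)
    have := hlip.dist_le_mul t s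
    rwa [Real.dist_eq, Real.dist_eq, Real.coe_toNNReal _ hMφpos.le] at this
  have hφlipX : ∀ t : ℝ, ∀ x y : ℝ, |φ t x - φ t y| ≤ Mφ * |x - y| := by
    intro t x y
    have hdiff : Differentiable ℝ (φ t) := (hφX t).differentiable (by simp)
    have hlip : LipschitzWith (Real.toNNReal Mφ) (φ t) := by
      apply lipschitzWith_of_nnnorm_deriv_le hdiff
      intro z
      rw [← NNReal.coe_le_coe, coe_nnnorm, Real.coe_toNNReal _ hMφpos.le, Real.norm_eq_abs]
      exact le_trans (hM t z).2.2 (le_max_left _ _)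
    have := hlip.dist_le_mul x y
    rwa [Real.dist_eq, Real.dist_eq, Real.coe_toNNReal _ hMφpos.le] at this
  have Φcont : Continuous (fun p : ℝ × ℝ => φ p.1 p.2) := by
    have : LipschitzWith (Real.toNNReal (2 * Mφ)) (fun p : ℝ × ℝ => φ p.1 p.2) := by
      apply LipschitzWith.of_dist_le_mul
      intro p q
      rw [Real.dist_eq, Real.coe_toNNReal _ (by positivity)]
      calc |φ p.1 p.2 - φ q.1 q.2|
          ≤ |φ p.1 p.2 - φ q.1 p.2| + |φ q.1 p.2 - φ q.1 q.2| := abs_sub_le _ _ _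
        _ ≤ Mφ * |p.1 - q.1| + Mφ * |p.2 - q.2| := by
            gcongr
            · exact hφlipT p.2 p.1 q.1
            · exact hφlipX q.1 p.2 q.2
        _ ≤ Mφ * dist p q + Mφ * dist p q := by
            gcongr
            · exact le_trans (le_of_eq (Real.dist_eq _ _).symm)
                (le_trans (le_max_left _ _) (le_of_eq (Prod.dist_eq (x := p)).symm))
            · exact le_trans (le_of_eq (Real.dist_eq _ _).symm)
                (le_trans (le_max_right _ _) (le_of_eq (Prod.dist_eq (x := p)).symm))
        _ = 2 * Mφ * dist p q := by ring
    exact this.continuous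
  have Ucont : ContinuousOn (fun p : ℝ × ℝ => u p.1 p.2) (Ici 0 ×ˢ (univ : Set ℝ)) :=
    hureg.unifCont.continuousOn
  -- eventual lower bound along the boundary curves
  set η : ℝ := min (liminf (fun t => u t (r t)) atTop) (liminf (fun t => u t (-(r t))) atTop) / 2
    with hηdef
  have hηpos : 0 < η := by
    have := lt_min h1 h2
    simp only [hηdef]
    positivity
  have hbd1 : IsBoundedUnder (· ≥ ·) atTop (fun t => u t (r t)) := by
    apply isBoundedUnder_of_eventually_ge (a := (0:ℝ))
    filter_upwards [eventually_ge_atTop (0:ℝ)] with t ht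
    exact (hupos t (r t) ht).le
  have hbd2 : IsBoundedUnder (· ≥ ·) atTop (fun t => u t (-(r t))) := by
    apply isBoundedUnder_of_eventually_ge (a := (0:ℝ))
    filter_upwards [eventually_ge_atTop (0:ℝ)] with t ht
    exact (hupos t (-(r t)) ht).le
  have hev1 : ∀ᶠ t in atTop, η < u t (r t) := by
    apply eventually_lt_of_lt_liminf _ hbd1
    have : η < liminf (fun t => u t (r t)) atTop := by
      have h := min_le_left (liminf (fun t => u t (r t)) atTop)
        (liminf (fun t => u t (-(r t))) atTop)
      have hmin := lt_min h1 h2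
      simp only [hηdef]
      linarith
    exact this
  have hev2 : ∀ᶠ t in atTop, η < u t (-(r t)) := by
    apply eventually_lt_of_lt_liminf _ hbd2
    have h := min_le_right (liminf (fun t => u t (r t)) atTop)
      (liminf (fun t => u t (-(r t))) atTop)
    have hmin := lt_min h1 h2
    simp only [hηdef]
    linarith
  obtain ⟨T₀, hT₀⟩ := eventually_atTop.mp ((hev1.and hev2).and (eventually_ge_atTop (1:ℝ)))
  set T : ℝ := max T₀ 1 with hTdef
  have hT1 : (1:ℝ) ≤ T := le_max_right _ _
  have hTpos : (0:ℝ) < T := lt_of_lt_of_le one_pos hT1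
  have hTprop : ∀ t : ℝ, T ≤ t → η < u t (r t) ∧ η < u t (-(r t)) := by
    intro t ht
    exact (hT₀ t (le_trans (le_max_left _ _) ht)).1
  -- minimum of u(T,·) on the initial interval
  have hrTpos : 0 < r T := hrpos T hTpos.le
  have hIccTne : (Icc (-(r T)) (r T)).Nonempty := ⟨0, by constructor <;> linarith⟩
  obtain ⟨xm, hxmmem, hxmin⟩ := isCompact_Icc.exists_isMinOn hIccTne
    ((hureg.contX T hTpos).continuous.continuousOn)
  set μ : ℝ := u T xm with hμdef
  have hμpos : 0 < μ := hupos T xm hTpos.le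
  -- choice of κ
  set κ : ℝ := min (min (η / (2 * Mφ)) (μ / (2 * Mφ))) (min (η' / (2 * Mφ)) (β₀ / (2 * Mφ)))
    with hκdef
  have hκpos : 0 < κ := by
    simp only [hκdef, lt_min_iff]
    refine ⟨⟨?_, ?_⟩, ?_, ?_⟩ <;> positivity
  have hbound : ∀ X : ℝ, κ ≤ X / (2 * Mφ) → ∀ t x : ℝ, κ * φ t x ≤ X / 2 := by
    intro X hX t x
    have h1 : κ * φ t x ≤ κ * Mφ :=
      mul_le_mul_of_nonneg_left (hφle t x) hκpos.le
    have h2 : κ * Mφ ≤ (X / (2 * Mφ)) * Mφ := mul_le_mul_of_nonneg_right hX hMφpos.le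
    have h3 : (X / (2 * Mφ)) * Mφ = X / 2 := by field_simp
    linarith
  have hκη : ∀ t x : ℝ, κ * φ t x ≤ η / 2 :=
    hbound η (le_trans (min_le_left _ _) (min_le_left _ _))
  have hκμ : ∀ t x : ℝ, κ * φ t x ≤ μ / 2 :=
    hbound μ (le_trans (min_le_left _ _) (min_le_right _ _))
  have hκη' : ∀ t x : ℝ, κ * φ t x ≤ η' / 2 :=
    hbound η' (le_trans (min_le_right _ _) (min_le_left _ _))
  have hκβ : ∀ t x : ℝ, κ * φ t x ≤ β₀ / 2 :=
    hbound β₀ (le_trans (min_le_right _ _) (min_le_right _ _))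
  clear_value Mφ σ η T μ κ
  clear hbound
  -- the key comparison claim
  have key : ∀ t₁ : ℝ, T ≤ t₁ → ∀ x₁ ∈ Icc (-(r t₁)) (r t₁), κ * φ t₁ x₁ < u t₁ x₁ := by
    intro t₁ ht₁ x₁ hx₁
    by_contra hcon
    push_neg at hcon
    have hSclosed : IsClosed (Ici (0:ℝ) ×ˢ (univ : Set ℝ)) := isClosed_Ici.prod isClosed_univ
    have Hcont : ContinuousOn (fun p : ℝ × ℝ => u p.1 p.2 - κ * φ p.1 p.2)
        (Ici (0:ℝ) ×ˢ (univ : Set ℝ)) :=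
      Ucont.sub ((continuous_const.mul Φcont).continuousOn)
    have hCclosed : IsClosed ((Ici (0:ℝ) ×ˢ (univ : Set ℝ)) ∩
        (fun p : ℝ × ℝ => u p.1 p.2 - κ * φ p.1 p.2) ⁻¹' Iic 0) :=
      Hcont.preimage_isClosed_of_isClosed hSclosed isClosed_Iic
    set D : Set (ℝ × ℝ) := (fun p : ℝ × ℝ => (p.1, p.2 * r p.1)) '' (Icc T t₁ ×ˢ Icc (-1:ℝ) 1)
      with hDdef
    have hsubI : Icc T t₁ ⊆ Ici (0:ℝ) := fun s hs => le_trans hTpos.le hs.1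
    have hmapcont : ContinuousOn (fun p : ℝ × ℝ => (p.1, p.2 * r p.1))
        (Icc T t₁ ×ˢ Icc (-1:ℝ) 1) := by
      apply ContinuousOn.prodMk continuousOn_fst
      apply ContinuousOn.mul continuousOn_snd
      exact hrC1.continuousOn.comp continuousOn_fst (fun p hp => hsubI (mem_prod.mp hp).1)
    have hDcomp : IsCompact D := (isCompact_Icc.prod isCompact_Icc).image_of_continuousOn hmapcont
    have hDmem : ∀ t x : ℝ, ((t, x) ∈ D ↔ (t ∈ Icc T t₁ ∧ |x| ≤ r t)) := by
      intro t x
      constructor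
      · rintro ⟨⟨s, y⟩, ⟨hs, hy⟩, heq⟩
        simp only [Prod.mk.injEq] at heq
        obtain ⟨h1, h2⟩ := heq
        constructor
        · rw [← h1]; exact hs
        · rw [← h2, ← h1, abs_mul]
          have hrs : 0 < r s := hrpos s (le_trans hTpos.le hs.1)
          have hy1 : |y| ≤ 1 := abs_le.mpr hy
          calc |y| * |r s| ≤ 1 * |r s| := mul_le_mul_of_nonneg_right hy1 (abs_nonneg _)
            _ = r s := by rw [one_mul, abs_of_pos hrs]
      · rintro ⟨ht, hx⟩
        have hrt : 0 < r t := hrpos t (le_trans hTpos.le ht.1)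
        refine ⟨(t, x / r t), ⟨ht, ?_⟩, ?_⟩
        · rw [mem_Icc, ← abs_le, abs_div, abs_of_pos hrt, div_le_one hrt]
          exact hx
        · exact congrArg (Prod.mk t) (div_mul_cancel₀ x (ne_of_gt hrt))
    have hEbadcomp : IsCompact (D ∩ ((Ici (0:ℝ) ×ˢ (univ : Set ℝ)) ∩
        (fun p : ℝ × ℝ => u p.1 p.2 - κ * φ p.1 p.2) ⁻¹' Iic 0)) :=
      hDcomp.inter_right hCclosed
    set Ebad : Set (ℝ × ℝ) := D ∩ ((Ici (0:ℝ) ×ˢ (univ : Set ℝ)) ∩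
        (fun p : ℝ × ℝ => u p.1 p.2 - κ * φ p.1 p.2) ⁻¹' Iic 0) with hEbaddef
    have hmemb : (t₁, x₁) ∈ Ebad := by
      refine ⟨(hDmem t₁ x₁).mpr ⟨⟨ht₁, le_refl _⟩, abs_le.mpr ⟨hx₁.1, hx₁.2⟩⟩,
        ⟨⟨le_trans hTpos.le ht₁, mem_univ _⟩, ?_⟩⟩
      simp only [mem_preimage, mem_Iic]
      linarith
    set Efst : Set ℝ := Prod.fst '' Ebad with hEfstdef
    have hEfstcomp : IsCompact Efst := hEbadcomp.image continuous_fst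
    have hEfstne : Efst.Nonempty := ⟨t₁, ⟨(t₁, x₁), hmemb, rfl⟩⟩
    have ht₀mem : sInf Efst ∈ Efst := hEfstcomp.sInf_mem hEfstne
    set t₀ : ℝ := sInf Efst with ht₀def
    obtain ⟨p, hp, hfst⟩ := ht₀mem
    have hpD : p.1 ∈ Icc T t₁ ∧ |p.2| ≤ r p.1 := (hDmem p.1 p.2).mp (by rw [Prod.mk.eta]; exact hp.1)
    have hpC : u p.1 p.2 - κ * φ p.1 p.2 ≤ 0 := hp.2.2
    rw [hfst] at hpD hpC
    have hlow : ∀ t' ∈ Efst, t₀ ≤ t' := fun t' h => csInf_le hEfstcomp.bddBelow h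
    have hTnot : T ∉ Efst := by
      rintro ⟨q, hq, hqfst⟩
      have hqD : q.1 ∈ Icc T t₁ ∧ |q.2| ≤ r q.1 := (hDmem q.1 q.2).mp (by rw [Prod.mk.eta]; exact hq.1)
      have hqC : u q.1 q.2 - κ * φ q.1 q.2 ≤ 0 := hq.2.2
      rw [hqfst] at hqD hqC
      have hq2 : q.2 ∈ Icc (-(r T)) (r T) := by
        have := abs_le.mp hqD.2
        exact ⟨this.1, this.2⟩
      have hμle : μ ≤ u T q.2 := by
        have h := hxmin hq2
        simp only [mem_setOf_eq] at h
        rw [hμdef]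
        exact h
      have := hκμ T q.2
      linarith
    have ht₀T : T < t₀ := by
      rcases lt_or_eq_of_le hpD.1.1 with h | h
      · exact h
      · exact absurd (h ▸ ⟨p, hp, hfst⟩ : T ∈ Efst) hTnot
    have ht₀pos : 0 < t₀ := lt_trans hTpos ht₀T
    have ht₀le : t₀ ≤ t₁ := hpD.1.2
    have hrt₀ : 0 < r t₀ := hrpos t₀ ht₀pos.le
    -- spatial minimizer of g at time t₀
    have hgC2 : ContDiff ℝ 2 (fun x => u t₀ x - κ * φ t₀ x) :=
      (hureg.contX t₀ ht₀pos).sub (contDiff_const.mul (hφX t₀))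
    obtain ⟨x₀, hx₀mem, hx₀min⟩ := isCompact_Icc.exists_isMinOn
      (⟨0, by constructor <;> linarith⟩ : (Icc (-(r t₀)) (r t₀)).Nonempty)
      hgC2.continuous.continuousOn
    have hx₀min' : ∀ x ∈ Icc (-(r t₀)) (r t₀),
        u t₀ x₀ - κ * φ t₀ x₀ ≤ u t₀ x - κ * φ t₀ x := fun x hx => hx₀min hx
    have hgx₀ : u t₀ x₀ - κ * φ t₀ x₀ ≤ 0 := by
      have hpmem : p.2 ∈ Icc (-(r t₀)) (r t₀) := by
        have := abs_le.mp hpD.2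
        exact ⟨this.1, this.2⟩
      have := hx₀min' p.2 hpmem
      linarith
    have hbR : 0 < u t₀ (r t₀) - κ * φ t₀ (r t₀) := by
      have h1 := (hTprop t₀ ht₀T.le).1
      have h2 := hκη t₀ (r t₀)
      linarith
    have hbL : 0 < u t₀ (-(r t₀)) - κ * φ t₀ (-(r t₀)) := by
      have h1 := (hTprop t₀ ht₀T.le).2
      have h2 := hκη t₀ (-(r t₀))
      linarith
    have hx₀lt : x₀ < r t₀ := by
      rcases lt_or_eq_of_le hx₀mem.2 with h | h
      · exact h
      · rw [h] at hgx₀; linarith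
    have hx₀gt : -(r t₀) < x₀ := by
      rcases lt_or_eq_of_le hx₀mem.1 with h | h
      · exact h
      · rw [← h] at hgx₀; linarith
    -- radius continuity at t₀
    have hrcont : ContinuousAt r t₀ := hrC1.continuousOn.continuousAt (Ici_mem_nhds ht₀pos)
    have habs : |x₀| < r t₀ := abs_lt.mpr ⟨hx₀gt, hx₀lt⟩
    have hevr : ∀ᶠ t in 𝓝 t₀, |x₀| < r t := hrcont.eventually (eventually_gt_nhds habs)
    obtain ⟨ρ, hρpos, hρ⟩ := Metric.eventually_nhds_iff.mp hevr
    set s₁ : ℝ := max T (t₀ - ρ) with hs₁def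
    have hs₁lt : s₁ < t₀ := max_lt ht₀T (by linarith)
    have hleft : ∀ t ∈ Ioo s₁ t₀, 0 < u t x₀ - κ * φ t x₀ := by
      intro t ht
      by_contra hcon2
      push_neg at hcon2
      have htT' : T ≤ t := le_trans (le_max_left T (t₀ - ρ)) ht.1.le
      have htd : dist t t₀ < ρ := by
        rw [Real.dist_eq]
        have h1 : t₀ - ρ ≤ s₁ := le_max_right _ _
        exact abs_lt.mpr ⟨by linarith [ht.1, ht.2], by linarith [ht.2]⟩
      have hrx : |x₀| < r t := hρ htd
      have hmemD : (t, x₀) ∈ D := (hDmem t x₀).mpr ⟨⟨htT', le_trans ht.2.le ht₀le⟩, hrx.le⟩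
      have hmemE : t ∈ Efst := by
        refine ⟨(t, x₀), ⟨hmemD, ⟨⟨le_trans hTpos.le htT', mem_univ _⟩, ?_⟩⟩, rfl⟩
        simp only [mem_preimage, mem_Iic]
        exact hcon2
      have := hlow t hmemE
      linarith [ht.2]
    -- value at the touching point is zero
    have hudiffT : DifferentiableAt ℝ (fun s => u s x₀) t₀ :=
      ((hureg.contT x₀).contDiffAt (isOpen_Ioi.mem_nhds ht₀pos)).differentiableAt one_ne_zero
    have hφdiffT : DifferentiableAt ℝ (fun s => φ s x₀) t₀ := ((hφT x₀).differentiable one_ne_zero) t₀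
    have hHtdiff : DifferentiableAt ℝ (fun s => u s x₀ - κ * φ s x₀) t₀ :=
      hudiffT.sub (hφdiffT.const_mul κ)
    have hge : 0 ≤ u t₀ x₀ - κ * φ t₀ x₀ := by
      have hnb : (𝓝[Ioo s₁ t₀] t₀).NeBot := by
        refine mem_closure_iff_nhdsWithin_neBot.mp ?_
        rw [closure_Ioo (ne_of_lt hs₁lt)]
        exact ⟨hs₁lt.le, le_refl _⟩
      have htend : Tendsto (fun s => u s x₀ - κ * φ s x₀) (𝓝[Ioo s₁ t₀] t₀)
          (𝓝 (u t₀ x₀ - κ * φ t₀ x₀)) :=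
        hHtdiff.continuousAt.continuousWithinAt
      refine ge_of_tendsto htend ?_
      filter_upwards [self_mem_nhdsWithin] with t ht
      exact (hleft t ht).le
    have hsval : u t₀ x₀ = κ * φ t₀ x₀ := by linarith
    -- time derivative at the touching point
    have hHd : HasDerivAt (fun s => u s x₀ - κ * φ s x₀)
        (pdT u t₀ x₀ - κ * pdT φ t₀ x₀) t₀ :=
      hudiffT.hasDerivAt.sub (hφdiffT.hasDerivAt.const_mul κ)
    have htd : pdT u t₀ x₀ - κ * pdT φ t₀ x₀ ≤ 0 := by
      apply left_deriv_nonpos hHd hs₁lt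
      intro t ht
      have h1 := hleft t ht
      have h2 : u t₀ x₀ - κ * φ t₀ x₀ = 0 := by linarith
      simp only [h2]
      linarith
    -- second space derivative at the touching point
    have hsd : 0 ≤ deriv (deriv (fun x => u t₀ x - κ * φ t₀ x)) x₀ :=
      second_deriv_nonneg_at_min hgC2 ⟨hx₀gt, hx₀lt⟩ hx₀min'
    have huX := hureg.contX t₀ ht₀pos
    have hφX2 := hφX t₀
    have hgderiv : deriv (fun x => u t₀ x - κ * φ t₀ x)
        = fun x => deriv (u t₀) x - κ * deriv (φ t₀) x := by
      funext x
      have h1 : DifferentiableAt ℝ (u t₀) x := (huX.differentiable (by simp)) x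
      have h2 : DifferentiableAt ℝ (φ t₀) x := (hφX2.differentiable (by simp)) x
      rw [deriv_fun_sub h1 (h2.const_mul κ), deriv_const_mul κ h2]
    have hsd2 : 0 ≤ pdXX u t₀ x₀ - κ * pdXX φ t₀ x₀ := by
      have hu2 : DifferentiableAt ℝ (deriv (u t₀)) x₀ :=
        differentiable_deriv_of_contDiff_two huX x₀
      have hφ2 : DifferentiableAt ℝ (deriv (φ t₀)) x₀ :=
        differentiable_deriv_of_contDiff_two hφX2 x₀
      have heqd : deriv (deriv (fun x => u t₀ x - κ * φ t₀ x)) x₀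
          = pdXX u t₀ x₀ - κ * pdXX φ t₀ x₀ := by
        rw [hgderiv, deriv_fun_sub hu2 (hφ2.const_mul κ), deriv_const_mul κ hφ2]
        rfl
      rw [heqd] at hsd
      exact hsd
    -- nonlinearity lower bound at sv := κ * φ t₀ x₀
    have hφpos0 : 0 < φ t₀ x₀ := lt_of_lt_of_le hm (hmφ t₀ x₀)
    have hsvpos : 0 < κ * φ t₀ x₀ := mul_pos hκpos hφpos0
    have hsvβ : κ * φ t₀ x₀ < β₀ := lt_of_le_of_lt (hκβ t₀ x₀) (by linarith)
    have hsvη' : κ * φ t₀ x₀ < η' := lt_of_le_of_lt (hκη' t₀ x₀) (by linarith)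
    have hcontf : ContinuousOn (f t₀ x₀) (Icc 0 (κ * φ t₀ x₀)) :=
      (hfC1 t₀ x₀).continuousOn.mono (Icc_subset_Icc le_rfl hsvβ.le)
    have hdifff : DifferentiableOn ℝ (f t₀ x₀) (Ioo 0 (κ * φ t₀ x₀)) :=
      ((hfC1 t₀ x₀).differentiableOn one_ne_zero).mono
        (fun y hy => ⟨hy.1.le, le_trans hy.2.le hsvβ.le⟩)
    obtain ⟨ξ, hξ, hξeq⟩ := exists_deriv_eq_slope (f t₀ x₀) hsvpos hcontf hdifff
    have hfval : f t₀ x₀ (κ * φ t₀ x₀) = deriv (f t₀ x₀) ξ * (κ * φ t₀ x₀) := by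
      rw [hξeq, hf0]
      field_simp
      ring
    have hξmem : ξ ∈ Icc (0:ℝ) β₀ := ⟨hξ.1.le, le_trans hξ.2.le hsvβ.le⟩
    have hξnhds : Icc (0:ℝ) β₀ ∈ 𝓝 ξ := Icc_mem_nhds hξ.1 (lt_trans hξ.2 hsvβ)
    have hDWeq : derivWithin (f t₀ x₀) (Icc 0 β₀) ξ = deriv (f t₀ x₀) ξ :=
      derivWithin_of_mem_nhds hξnhds
    have happ := hη' t₀ x₀ ξ hξmem 0 ⟨le_refl _, hβ₀.le⟩
      (by rw [sub_zero, abs_of_pos hξ.1]; exact lt_trans hξ.2 hsvη')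
    have hc₀eq : derivWithin (f t₀ x₀) (Icc 0 β₀) 0 = derivWithin (f t₀ x₀) (Ici 0) 0 := by
      apply derivWithin_congr_set
      have hmem : Iio β₀ ∈ 𝓝 (0:ℝ) := Iio_mem_nhds hβ₀
      filter_upwards [hmem] with y hy
      simp only [mem_Icc, mem_Ici, eq_iff_iff]
      exact ⟨fun h => h.1, fun h => ⟨h, le_of_lt hy⟩⟩
    have hlower : derivWithin (f t₀ x₀) (Ici 0) 0 - σ < deriv (f t₀ x₀) ξ := by
      rw [← hDWeq, ← hc₀eq]
      have := abs_lt.mp happ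
      linarith [this.1]
    have hflb : (derivWithin (f t₀ x₀) (Ici 0) 0 - σ) * (κ * φ t₀ x₀) ≤ f t₀ x₀ (κ * φ t₀ x₀) := by
      rw [hfval]
      exact mul_le_mul_of_nonneg_right hlower.le hsvpos.le
    -- PDE and eigenfunction inequality; final contradiction
    have hpde := hupde t₀ x₀ ht₀pos
    rw [hsval] at hpde
    have heig := hφeig t₀ x₀
    have hQ : d * (κ * pdXX φ t₀ x₀) ≤ d * pdXX u t₀ x₀ :=
      mul_le_mul_of_nonneg_left (by linarith) hd.le
    have hE := mul_le_mul_of_nonneg_left heig hκpos.le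
    have hσmono : σ * (κ * φ t₀ x₀) = -lam / 2 * (κ * φ t₀ x₀) := by rw [hσdef]
    have hfinal : 0 < σ * (κ * φ t₀ x₀) := mul_pos hσpos hsvpos
    linarith [htd, hpde, hQ, hE, hflb, hfinal, hσmono]
  -- conclusion
  have hκm : 0 < κ * m := mul_pos hκpos hm
  have hevF : ∀ᶠ t in atTop, κ * m ≤ sInf (u t '' Icc (-(r t)) (r t)) := by
    filter_upwards [eventually_ge_atTop T] with t htT
    have htpos : (0:ℝ) < t := lt_of_lt_of_le hTpos htT
    have hrt : 0 < r t := hrpos t htpos.le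
    apply le_csInf
    · exact (Nonempty.image _ ⟨0, by constructor <;> linarith⟩)
    · rintro y ⟨x, hx, rfl⟩
      have h := key t htT x hx
      have : κ * m ≤ κ * φ t x := mul_le_mul_of_nonneg_left (hmφ t x) hκpos.le
      linarith
  have hcob : IsCoboundedUnder (· ≥ ·) atTop (fun t => sInf (u t '' Icc (-(r t)) (r t))) := by
    apply isCoboundedUnder_ge_of_eventually_le atTop (x := Mu)
    filter_upwards [eventually_ge_atTop T] with t htT
    have htpos : (0:ℝ) < t := lt_of_lt_of_le hTpos htT
    have hrt : 0 < r t := hrpos t htpos.le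
    have hmem : u t (r t) ∈ u t '' Icc (-(r t)) (r t) :=
      ⟨r t, ⟨by linarith, le_refl _⟩, rfl⟩
    have hbdd : BddBelow (u t '' Icc (-(r t)) (r t)) := by
      refine ⟨0, ?_⟩
      rintro y ⟨x, _, rfl⟩
      exact (hupos t x htpos.le).le
    calc sInf (u t '' Icc (-(r t)) (r t)) ≤ u t (r t) := csInf_le hbdd hmem
      _ ≤ Mu := le_trans (le_abs_self _) (hMu t (r t) htpos.le)
  calc (0:ℝ) < κ * m := hκm
    _ ≤ liminf (fun t => sInf (u t '' Icc (-(r t)) (r t))) atTop := le_liminf_of_le hcob hevF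
end
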